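/- Let k be an infinite field. Then H₁(SL₂(k[t,t⁻¹]); Z) = 0; equivalently, the group SL₂(k[t,t⁻¹]) is perfect (equal to its own commutator subgroup). -/

import Mathlib

/-! ### Group homology via coinvariants of the standard resolution

For a commutative ring `R` and a group `G`, we define the group homology `H_n(G; R)`
(with trivial coefficients `R`) as the `n`-th homology of the complex obtained by applying the
coinvariants functor to the standard projective resolution of the trivial representation `R`
of `G`, together with the maps induced by group homomorphisms. -/

open CategoryTheory

namespace GH

variable (R : Type) [CommRing R] (G : Type) [Group G]
def coinvKer (V : Rep.{0} R G) : Submodule R V :=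
  Submodule.span R {x | ∃ (g : G) (v : V), V.ρ g v - v = x}
lemma map_coinvKer_le {V W : Rep.{0} R G} (f : V ⟶ W) :
    coinvKer R G V ≤ (coinvKer R G W).comap f.hom.toLinearMap := by
  rw [coinvKer, Submodule.span_le]
  rintro x ⟨g, v, rfl⟩
  rw [SetLike.mem_coe, Submodule.mem_comap]
  refine Submodule.subset_span ⟨g, f.hom v, ?_⟩
  rw [← Rep.hom_comm_apply]
  exact (map_sub f.hom _ _).symm
noncomputable def coinvFunctor : Rep.{0} R G ⥤ ModuleCat R where
  obj V := ModuleCat.of R (V ⧸ coinvKer R G V)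
  map {V W} f := ModuleCat.ofHom (Submodule.mapQ _ _ f.hom.toLinearMap (map_coinvKer_le R G f))
  map_id V := by ext : 1; apply Submodule.linearMap_qext; ext x; rfl
  map_comp {U V W} f g := by ext : 1; apply Submodule.linearMap_qext; ext x; rfl
lemma coinvFunctor_map_mk {V W : Rep.{0} R G} (f : V ⟶ W) (x : V) :
    (coinvFunctor R G).map f (Submodule.Quotient.mk x) = Submodule.Quotient.mk (f.hom x) := rfl
instance coinvFunctor_additive : (coinvFunctor R G).Additive where
  map_add {V W f g} := by ext : 1; apply Submodule.linearMap_qext; ext x; rfl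

/-- The chain complex of coinvariants of the standard projective resolution of the trivial
representation `R` of `G`; its homology is the group homology `H_*(G; R)`. -/
noncomputable def chainComplex : ChainComplex (ModuleCat R) ℕ :=
  ((coinvFunctor R G).mapHomologicalComplex _).obj (Rep.standardComplex R G)

/-- The simplicial `R`-module whose alternating face map complex agrees with `chainComplex`. -/
noncomputable def simplicialCoinv : CategoryTheory.SimplicialObject (ModuleCat R) :=
  classifyingSpaceUniversalCover G ⋙ Rep.linearization R G ⋙ coinvFunctor R G
variable {G} {G' : Type} [Group G'] (φ : G →* G')
noncomputable def coverMap (n : SimplexCategoryᵒᵖ) :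
    (((classifyingSpaceUniversalCover G).obj n).V →₀ R) →ₗ[R]
      (((classifyingSpaceUniversalCover G').obj n).V →₀ R) :=
  Finsupp.lmapDomain R R (fun v i => φ (v i))
/-- `coverMap` transported to the monoid algebras `R[Gⁿ⁺¹]` carrying the linearizations. -/
noncomputable def coverMapA (n : SimplexCategoryᵒᵖ) :
    ((classifyingSpaceUniversalCover G ⋙ Rep.linearization R G).obj n) →ₗ[R]
      ((classifyingSpaceUniversalCover G' ⋙ Rep.linearization R G').obj n) :=
  (MonoidAlgebra.coeffLinearEquiv R).symm.toLinearMap ∘ₗ coverMap R φ n ∘ₗ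
    (MonoidAlgebra.coeffLinearEquiv R).toLinearMap
lemma lmap_comm (n : SimplexCategoryᵒᵖ) (g : G)
    (x : ((classifyingSpaceUniversalCover G ⋙ Rep.linearization R G).obj n)) :
    coverMapA R φ n (((classifyingSpaceUniversalCover G ⋙ Rep.linearization R G).obj n).ρ g x) =
      (((classifyingSpaceUniversalCover G' ⋙ Rep.linearization R G').obj n).ρ (φ g))
        (coverMapA R φ n x) := by
  induction x using MonoidAlgebra.induction_linear with
  | zero => simp
  | add f h hf hh => rw [map_add, map_add, hf, hh, map_add, map_add]
  | single w r =>
      simp [coverMapA, coverMap, Representation.linearize]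
      erw [Finsupp.lmapDomain_apply, Finsupp.mapDomain_single, Finsupp.lmapDomain_apply,
        Finsupp.mapDomain_single]
      simp [MonoidAlgebra.mapDomainLinearMap]
      erw [Finsupp.mapDomain_single]
      congr 1
      funext i
      show φ (g * w i) = φ g * φ (w i)
      rw [map_mul]
lemma simplicialMap_aux (n : SimplexCategoryᵒᵖ) :
    coinvKer R G ((classifyingSpaceUniversalCover G ⋙ Rep.linearization R G).obj n) ≤
      (coinvKer R G' ((classifyingSpaceUniversalCover G' ⋙ Rep.linearization R G').obj n)).comap
        (coverMapA R φ n) := by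
  rw [coinvKer, Submodule.span_le]
  rintro x ⟨g, v, rfl⟩
  rw [SetLike.mem_coe, Submodule.mem_comap]
  refine Submodule.subset_span ⟨φ g, coverMapA R φ n v, ?_⟩
  rw [← lmap_comm]
  exact (map_sub (coverMapA R φ n) _ _).symm
noncomputable def simplicialMap :
    simplicialCoinv R G ⟶ simplicialCoinv R G' where
  app n := ModuleCat.ofHom (Submodule.mapQ _ _ (coverMapA R φ n) (simplicialMap_aux R φ n))
  naturality {n m} f := by
    ext : 1
    apply Submodule.linearMap_qext
    apply LinearMap.ext
    intro x
    show Submodule.Quotient.mk (coverMapA R φ m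
        (((Rep.linearization R G).map ((classifyingSpaceUniversalCover G).map f)).hom x)) =
      Submodule.Quotient.mk (((Rep.linearization R G').map
        ((classifyingSpaceUniversalCover G').map f)).hom (coverMapA R φ n x))
    congr 1
    induction x using MonoidAlgebra.induction_linear with
    | zero => simp
    | add a b ha hb => rw [map_add, map_add, ha, hb, map_add, map_add]
    | single w r =>
        simp [coverMapA, coverMap]
        erw [Representation.linearizeMap_single, MonoidAlgebra.coeff_single,
          Finsupp.lmapDomain_apply, Finsupp.mapDomain_single, Finsupp.lmapDomain_apply,
          Finsupp.mapDomain_single, MonoidAlgebra.ofCoeff_single,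
          Representation.linearizeMap_single]
        rfl

/-- Group homology `H_n(G; R)` with trivial coefficients `R`. -/
noncomputable def H (n : ℕ) (G : Type) [Group G] : ModuleCat R := (chainComplex R G).homology n

lemma chainComplex_eq (G : Type) [Group G] :
    chainComplex R G =
      (AlgebraicTopology.alternatingFaceMapComplex (ModuleCat R)).obj (simplicialCoinv R G) :=
  Functor.congr_obj (AlgebraicTopology.map_alternatingFaceMapComplex (coinvFunctor R G))
    (classifyingSpaceUniversalCover G ⋙ Rep.linearization R G)

/-- The map of chain complexes induced by a group homomorphism. -/
noncomputable def chainMap : chainComplex R G ⟶ chainComplex R G' :=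
  eqToHom (chainComplex_eq R G) ≫
    (AlgebraicTopology.alternatingFaceMapComplex (ModuleCat R)).map (simplicialMap R φ) ≫
      eqToHom (chainComplex_eq R G').symm

/-- The map on group homology induced by a group homomorphism. -/
noncomputable def Hmap (n : ℕ) : H R n G ⟶ H R n G' :=
  HomologicalComplex.homologyMap (chainMap R φ) n

end GH

namespace GH

/-- `SL₂(A)`: the special linear group of 2×2 matrices over `A`. -/
abbrev SL2 (A : Type) [CommRing A] := Matrix.SpecialLinearGroup (Fin 2) A

end GH
open CategoryTheory
section T1
open GH groupCohomology

variable (G : Type) [Group G]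

noncomputable def Nsub : Submodule ℤ ((Rep.standardComplex ℤ G).X 1) :=
  coinvKer ℤ G ((Rep.standardComplex ℤ G).X 1) ⊔
    LinearMap.range ((Rep.standardComplex ℤ G).d 2 1).hom.toLinearMap

lemma step1 (f : Fin 2 → G) :
    MonoidAlgebra.single f (1:ℤ) - MonoidAlgebra.single ![1, (f 0)⁻¹ * f 1] 1 ∈
      coinvKer ℤ G ((Rep.standardComplex ℤ G).X 1) := by
  refine Submodule.subset_span ⟨f 0, MonoidAlgebra.single ![1, (f 0)⁻¹ * f 1] 1, ?_⟩
  congr 1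
  erw [Representation.linearize_single]
  congr 1
  funext i
  show f 0 * (![1, (f 0)⁻¹ * f 1] i) = f i
  fin_cases i <;> simp

end T1

section T2
open GH groupCohomology
variable (G : Type) [Group G]

lemma coinv_le_N :
    coinvKer ℤ G ((Rep.standardComplex ℤ G).X 1) ≤ Nsub G := le_sup_left

noncomputable def Fq (g : G) : ((Rep.standardComplex ℤ G).X 1) ⧸ Nsub G :=
  Submodule.Quotient.mk (MonoidAlgebra.single ![1, g] 1)

lemma mk_single_eq (f : Fin 2 → G) :
    (Submodule.Quotient.mk (MonoidAlgebra.single f 1) : ((Rep.standardComplex ℤ G).X 1) ⧸ Nsub G) =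
      Fq G ((f 0)⁻¹ * f 1) := by
  rw [Fq]
  exact (Submodule.Quotient.eq _).2 (coinv_le_N G (step1 G f))

lemma comp_succAbove0 (c : Fin 3 → G) : c ∘ (0 : Fin 3).succAbove = ![c 1, c 2] := by
  funext i; fin_cases i <;> rfl

lemma comp_succAbove1 (c : Fin 3 → G) : c ∘ (1 : Fin 3).succAbove = ![c 0, c 2] := by
  funext i; fin_cases i <;> rfl

lemma comp_succAbove2 (c : Fin 3 → G) : c ∘ (2 : Fin 3).succAbove = ![c 0, c 1] := by
  funext i; fin_cases i <;> rfl

lemma d_mem_N (c : Fin 3 → G) :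
    MonoidAlgebra.single ![c 1, c 2] (1:ℤ) - MonoidAlgebra.single ![c 0, c 2] 1
      + MonoidAlgebra.single ![c 0, c 1] 1 ∈ Nsub G := by
  refine Submodule.mem_sup_right ⟨MonoidAlgebra.single c 1, ?_⟩
  erw [Rep.standardComplex.d_apply]
  erw [Rep.standardComplex.d_of]
  rw [Fin.sum_univ_three,
    comp_succAbove0, comp_succAbove1, comp_succAbove2]
  norm_num [MonoidAlgebra.single_neg, sub_eq_add_neg]

lemma Fq_mul (g h : G) : Fq G (g * h) = Fq G g + Fq G h := by
  have h1 := d_mem_N G ![1, g, g * h]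
  rw [← Submodule.Quotient.mk_eq_zero] at h1
  erw [Submodule.Quotient.mk_add,
    Submodule.Quotient.mk_sub, mk_single_eq, mk_single_eq, mk_single_eq] at h1
  simp only [Matrix.cons_val_zero, Matrix.cons_val_one, Matrix.head_cons, inv_one, one_mul,
    inv_mul_cancel_left] at h1
  rw [show (![1, g, g * h] : Fin 3 → G) 2 = g * h from rfl, inv_mul_cancel_left] at h1
  rw [sub_add_eq_add_sub, sub_eq_zero] at h1
  rw [← h1, add_comm]

lemma Fq_zero (hG : commutator G = ⊤) (g : G) : Fq G g = 0 := by
  let φ : G →* Multiplicative (((Rep.standardComplex ℤ G).X 1) ⧸ Nsub G) :=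
    MonoidHom.mk' (fun g => Multiplicative.ofAdd (Fq G g))
      (fun g h => by rw [Fq_mul]; rfl)
  have hker : (⊤ : Subgroup G) ≤ φ.ker := by
    rw [← hG, commutator_def, Subgroup.commutator_le]
    intro p _ q _
    rw [MonoidHom.mem_ker, map_commutatorElement, commutatorElement_eq_one_iff_commute]
    exact mul_comm _ _
  have : φ g = 1 := hker (Subgroup.mem_top g)
  exact Multiplicative.ofAdd.injective this

lemma top_le_N (hG : commutator G = ⊤) : ∀ v : ((Rep.standardComplex ℤ G).X 1), v ∈ Nsub G := by
  intro v
  induction v using MonoidAlgebra.induction with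
  | zero => exact zero_mem _
  | single_add f r v _ _ hv =>
      refine add_mem ?_ hv
      have hone : MonoidAlgebra.single f (1:ℤ) ∈ Nsub G := by
        have h2 : MonoidAlgebra.single ![1, (f 0)⁻¹ * f 1] (1:ℤ) ∈ Nsub G := by
          apply (Submodule.Quotient.mk_eq_zero _).1
          exact Fq_zero G hG _
        have := add_mem (coinv_le_N G (step1 G f)) h2
        rw [(sub_add_cancel (MonoidAlgebra.single f (1:ℤ)) (MonoidAlgebra.single ![1, (f 0)⁻¹ * f 1] 1)).symm]
        exact this
      have : MonoidAlgebra.single f r = r • MonoidAlgebra.single f (1:ℤ) := by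
        rw [MonoidAlgebra.smul_single, smul_eq_mul, mul_one]
      rw [this]
      exact Submodule.smul_mem _ _ hone

lemma h1_subsingleton (hG : commutator G = ⊤) : Subsingleton (H ℤ 1 G) := by
  have hex : (chainComplex ℤ G).ExactAt 1 := by
    rw [HomologicalComplex.exactAt_iff' _ 2 1 0 (by simp [ChainComplex.prev])
      (by simp [ChainComplex.next_nat_succ])]
    rw [ShortComplex.moduleCat_exact_iff]
    intro x _
    obtain ⟨v, rfl⟩ := Submodule.Quotient.mk_surjective _ x
    have hv := top_le_N G hG v
    rw [Nsub] at hv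
    obtain ⟨y, hy, z, ⟨w, rfl⟩, hyz⟩ := Submodule.mem_sup.1 hv
    refine ⟨Submodule.Quotient.mk w, ?_⟩
    show (coinvFunctor ℤ G).map ((Rep.standardComplex ℤ G).d 2 1)
      (Submodule.Quotient.mk w) = Submodule.Quotient.mk v
    rw [coinvFunctor_map_mk, ← hyz, Submodule.Quotient.mk_add,
      (Submodule.Quotient.mk_eq_zero _).2 hy, zero_add]
    rfl
  rw [HomologicalComplex.exactAt_iff_isZero_homology] at hex
  have h0 : (𝟙 (H ℤ 1 G) : H ℤ 1 G ⟶ H ℤ 1 G) = 0 := hex.eq_of_src _ _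
  refine ⟨fun a b => ?_⟩
  have ha : a = (𝟙 (H ℤ 1 G) : H ℤ 1 G ⟶ H ℤ 1 G) a := rfl
  have hb : b = (𝟙 (H ℤ 1 G) : H ℤ 1 G ⟶ H ℤ 1 G) b := rfl
  rw [ha, hb, h0]
  rfl

end T2

section Width
open LaurentPolynomial Polynomial

variable {K : Type} [Field K]

/-- Coefficient of a Laurent polynomial. -/
def lco (f : LaurentPolynomial K) (y : ℤ) : K := f.coeff y

lemma lco_mul_T (f : LaurentPolynomial K) (n y : ℤ) : lco (f * T n) y = lco f (y - n) := by
  show (f * T n : LaurentPolynomial K).coeff y = _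
  erw [AddMonoidAlgebra.coeff_mul_single_apply]
  rw [mul_one]
  rfl

lemma lsupport_mem {f : LaurentPolynomial K} {y : ℤ} :
    y ∈ f.coeff.support ↔ lco f y ≠ 0 := Finsupp.mem_support_iff

/-- The "width" of a Laurent polynomial: distance between top and bottom degree. -/
noncomputable def lwidth (f : LaurentPolynomial K) : ℕ :=
  ((WithBot.unbotD 0 f.coeff.support.max) - (WithTop.untopD 0 f.coeff.support.min)).toNat

lemma lwidth_eq {f : LaurentPolynomial K} (h : f ≠ 0) :
    lwidth f = ((f.coeff.support.max' (Finsupp.support_nonempty_iff.2 (AddMonoidAlgebra.coeff_eq_zero.not.2 h))) -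
      (f.coeff.support.min' (Finsupp.support_nonempty_iff.2 (AddMonoidAlgebra.coeff_eq_zero.not.2 h)))).toNat := by
  rw [lwidth, ← Finset.coe_max' (Finsupp.support_nonempty_iff.2 (AddMonoidAlgebra.coeff_eq_zero.not.2 h)),
    ← Finset.coe_min' (Finsupp.support_nonempty_iff.2 (AddMonoidAlgebra.coeff_eq_zero.not.2 h)), WithBot.unbotD_coe, WithTop.untopD_coe]

lemma support_mul_T (f : LaurentPolynomial K) (n : ℤ) :
    (f * T n).coeff.support = f.coeff.support.image (· + n) := by
  ext y
  simp only [Finsupp.mem_support_iff, Finset.mem_image]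
  show lco (f * T n) y ≠ 0 ↔ _
  rw [lco_mul_T]
  constructor
  · intro h; exact ⟨y - n, by simpa [lco] using h, by ring⟩
  · rintro ⟨x, hx, rfl⟩
    simpa [lco] using hx

lemma mul_T_ne_zero {f : LaurentPolynomial K} (hf : f ≠ 0) (n : ℤ) : f * T n ≠ 0 := by
  intro h
  apply hf
  have := congrArg (· * T (-n)) h
  simpa [mul_T_assoc] using this

lemma lwidth_mul_T {f : LaurentPolynomial K} (hf : f ≠ 0) (n : ℤ) :
    lwidth (f * T n) = lwidth f := by
  have hmono : Monotone (· + n : ℤ → ℤ) := fun a b hab => by simpa using hab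
  have hfne := Finsupp.support_nonempty_iff.2 (AddMonoidAlgebra.coeff_eq_zero.not.2 hf)
  have hne : (f.coeff.support.image (· + n)).Nonempty := hfne.image _
  rw [lwidth, lwidth, support_mul_T, ← Finset.coe_max' hne, ← Finset.coe_min' hne,
    ← Finset.coe_max' hfne, ← Finset.coe_min' hfne,
    Finset.max'_image hmono, Finset.min'_image hmono,
    WithBot.unbotD_coe, WithTop.untopD_coe, WithBot.unbotD_coe, WithTop.untopD_coe]
  congr 1
  ring

lemma lwidth_neg {f : LaurentPolynomial K} : lwidth (-f) = lwidth f := by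
  have : (-f).coeff.support = f.coeff.support := Finsupp.support_neg f.coeff
  rw [lwidth, lwidth, this]

lemma mem_support_toLaurent {p : K[X]} {x : ℤ} :
    x ∈ (Polynomial.toLaurent p).coeff.support ↔ ∃ m ∈ p.support, (m : ℤ) = x := by
  rw [support_coeff_toLaurent]
  simp [Nat.castEmbedding]

lemma lwidth_toLaurent_le {p : K[X]} (hp : p ≠ 0) :
    lwidth (Polynomial.toLaurent p) ≤ p.natDegree := by
  have h2 : Polynomial.toLaurent p ≠ 0 := Polynomial.toLaurent_ne_zero.2 hp
  rw [lwidth_eq h2]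
  have hmax : (Polynomial.toLaurent p).coeff.support.max' (Finsupp.support_nonempty_iff.2 (AddMonoidAlgebra.coeff_eq_zero.not.2 h2)) ≤
      (p.natDegree : ℤ) := by
    apply Finset.max'_le
    intro y hy
    obtain ⟨m, hm, rfl⟩ := mem_support_toLaurent.1 hy
    exact_mod_cast Polynomial.le_natDegree_of_mem_supp m hm
  have hmin : (0:ℤ) ≤ (Polynomial.toLaurent p).coeff.support.min'
      (Finsupp.support_nonempty_iff.2 (AddMonoidAlgebra.coeff_eq_zero.not.2 h2)) := by
    apply Finset.le_min'
    intro y hy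
    obtain ⟨m, hm, rfl⟩ := mem_support_toLaurent.1 hy
    exact_mod_cast Nat.zero_le m
  omega

lemma lwidth_toLaurent {p : K[X]} (hp : p ≠ 0) (h0 : p.coeff 0 ≠ 0) :
    lwidth (Polynomial.toLaurent p) = p.natDegree := by
  have h2 : Polynomial.toLaurent p ≠ 0 := Polynomial.toLaurent_ne_zero.2 hp
  apply le_antisymm (lwidth_toLaurent_le hp)
  rw [lwidth_eq h2]
  have hmax : (p.natDegree : ℤ) ≤
      (Polynomial.toLaurent p).coeff.support.max' (Finsupp.support_nonempty_iff.2 (AddMonoidAlgebra.coeff_eq_zero.not.2 h2)) :=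
    Finset.le_max' _ _ (mem_support_toLaurent.2
      ⟨p.natDegree, Polynomial.natDegree_mem_support_of_nonzero hp, rfl⟩)
  have hmin : (Polynomial.toLaurent p).coeff.support.min' (Finsupp.support_nonempty_iff.2 (AddMonoidAlgebra.coeff_eq_zero.not.2 h2)) ≤ 0 :=
    Finset.min'_le _ _ (mem_support_toLaurent.2
      ⟨0, Polynomial.mem_support_iff.2 h0, rfl⟩)
  omega

end Width
section Div
open LaurentPolynomial Polynomial

variable {K : Type} [Field K]

lemma toLaurent_mul_T_ne {c : LaurentPolynomial K} (hc : c ≠ 0) {m : ℕ} {c₀ : K[X]}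
    (h : Polynomial.toLaurent c₀ = c * T (m : ℤ)) : c₀ ≠ 0 := by
  intro h0
  rw [h0, map_zero] at h
  exact mul_T_ne_zero hc _ h.symm

/-- Division with remainder in `K[T;T⁻¹]` with respect to the width. -/
lemma laurent_div (a c : LaurentPolynomial K) (hc : c ≠ 0) :
    ∃ q r : LaurentPolynomial K, a = q * c + r ∧ (r = 0 ∨ lwidth r < lwidth c) := by
  obtain ⟨n, a₀, ha⟩ := LaurentPolynomial.exists_T_pow a
  obtain ⟨m, c₀, hc₀⟩ := LaurentPolynomial.exists_T_pow c
  have hc₀0 : c₀ ≠ 0 := toLaurent_mul_T_ne hc hc₀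
  obtain ⟨c₁, hsplit, hndvd⟩ := c₀.exists_eq_pow_rootMultiplicity_mul_and_not_dvd hc₀0 0
  rw [map_zero, sub_zero] at hsplit hndvd
  set s := c₀.rootMultiplicity 0 with hs
  have hc₁0 : c₁ ≠ 0 := by rintro rfl; rw [mul_zero] at hsplit; exact hc₀0 hsplit
  have hc₁coeff : c₁.coeff 0 ≠ 0 := fun h => hndvd (Polynomial.X_dvd_iff.2 h)
  have hTs : Polynomial.toLaurent c₁ = c * T ((m : ℤ) - s) := by
    have h1 : Polynomial.toLaurent c₀ = T (s : ℤ) * Polynomial.toLaurent c₁ := by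
      rw [hsplit, map_mul, Polynomial.toLaurent_X_pow]
    have := congrArg (· * T (-(s:ℤ))) (h1.symm.trans hc₀)
    simp only [mul_T_assoc] at this
    calc Polynomial.toLaurent c₁ = T (s:ℤ) * Polynomial.toLaurent c₁ * T (-(s:ℤ)) := by
          rw [mul_comm (T (s:ℤ)), mul_T_assoc, add_neg_cancel, T_zero, mul_one]
      _ = c * T ((m:ℤ) + -(s:ℤ)) := this
      _ = c * T ((m:ℤ) - s) := by rw [sub_eq_add_neg]
  have hwc : lwidth c = c₁.natDegree := by
    have : lwidth (Polynomial.toLaurent c₁) = lwidth c := by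
      rw [hTs]; exact lwidth_mul_T hc _
    rw [← this, lwidth_toLaurent hc₁0 hc₁coeff]
  -- monic divisor
  set u := (c₁.leadingCoeff)⁻¹ with hu
  have hu0 : u ≠ 0 := inv_ne_zero (Polynomial.leadingCoeff_ne_zero.2 hc₁0)
  have hmonic : (c₁ * Polynomial.C u).Monic := Polynomial.monic_mul_leadingCoeff_inv hc₁0
  set c₂ := c₁ * Polynomial.C u with hc₂
  have hdeg : c₂.natDegree = c₁.natDegree := Polynomial.natDegree_mul_C hu0
  set q₀ := a₀ /ₘ c₂ with hq₀
  set r₀ := a₀ %ₘ c₂ with hr₀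
  have hdivmod : r₀ + c₂ * q₀ = a₀ := Polynomial.modByMonic_add_div a₀ c₂
  have ha' : a = Polynomial.toLaurent a₀ * T (-(n:ℤ)) := by
    rw [ha, mul_T_assoc, add_neg_cancel, T_zero, mul_one]
  have hC2 : Polynomial.toLaurent c₂ = c * T ((m:ℤ) - s) * LaurentPolynomial.C u := by
    rw [hc₂, map_mul, hTs, Polynomial.toLaurent_C]
  have hTT : (T ((m:ℤ) - s) * T (-(n:ℤ)) : LaurentPolynomial K) = T ((m:ℤ) - s - n) := by
    rw [← T_add, sub_eq_add_neg ((m:ℤ) - s)]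
  refine ⟨LaurentPolynomial.C u * Polynomial.toLaurent q₀ * T ((m:ℤ) - s - n),
    Polynomial.toLaurent r₀ * T (-(n:ℤ)), ?_, ?_⟩
  · rw [ha', ← hdivmod, map_add, map_mul, hC2, ← hTT]
    ring
  · by_cases hr : r₀ = 0
    · left; rw [hr, map_zero, zero_mul]
    · right
      have h1 : lwidth (Polynomial.toLaurent r₀ * T (-(n:ℤ))) = lwidth (Polynomial.toLaurent r₀) :=
        lwidth_mul_T (Polynomial.toLaurent_ne_zero.2 hr) _
      have h2 : r₀.natDegree < c₂.natDegree :=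
        Polynomial.natDegree_lt_natDegree hr (Polynomial.degree_modByMonic_lt a₀ hmonic)
      have h3 := lwidth_toLaurent_le (p := r₀) hr
      rw [h1, hwc]
      omega
end Div
section SL
open Matrix
open scoped commutatorElement

variable {A : Type} [CommRing A]

/-- Elementary matrix with upper off-diagonal entry. -/
def E12 (x : A) : GH.SL2 A := ⟨!![1, x; 0, 1], by simp [Matrix.det_fin_two_of]⟩

/-- Elementary matrix with lower off-diagonal entry. -/
def E21 (x : A) : GH.SL2 A := ⟨!![1, 0; x, 1], by simp [Matrix.det_fin_two_of]⟩

/-- Diagonal matrix with inverse pair on the diagonal. -/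
def Dg (a b : A) (h : a * b = 1) : GH.SL2 A := ⟨!![a, 0; 0, b], by simp [Matrix.det_fin_two_of, h]⟩

/-- The Weyl element. -/
def wel : GH.SL2 A := ⟨!![0, 1; -1, 0], by simp [Matrix.det_fin_two_of]⟩

lemma one_mat : (1 : Matrix (Fin 2) (Fin 2) A) = !![1, 0; 0, 1] := by
  ext i j; fin_cases i <;> fin_cases j <;> simp

lemma E12_mul (x y : A) : E12 x * E12 y = E12 (x + y) := by
  apply Subtype.ext
  show (!![1, x; 0, 1] * !![1, y; 0, 1] : Matrix (Fin 2) (Fin 2) A) = _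
  rw [Matrix.mul_fin_two]
  congr 1 <;> ring

lemma E21_mul (x y : A) : E21 x * E21 y = E21 (x + y) := by
  apply Subtype.ext
  show (!![1, 0; x, 1] * !![1, 0; y, 1] : Matrix (Fin 2) (Fin 2) A) = _
  rw [Matrix.mul_fin_two]
  congr 1 <;> ring

lemma E12_zero : (E12 0 : GH.SL2 A) = 1 := by
  apply Subtype.ext
  show (!![1, (0:A); 0, 1]) = (1 : Matrix (Fin 2) (Fin 2) A)
  rw [one_mat]

lemma E21_zero : (E21 0 : GH.SL2 A) = 1 := by
  apply Subtype.ext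
  show (!![1, (0:A); (0:A), 1]) = (1 : Matrix (Fin 2) (Fin 2) A)
  rw [one_mat]

lemma E12_inv (x : A) : (E12 x)⁻¹ = E12 (-x) := by
  apply inv_eq_of_mul_eq_one_right
  rw [E12_mul, add_neg_cancel, E12_zero]

lemma E21_inv (x : A) : (E21 x)⁻¹ = E21 (-x) := by
  apply inv_eq_of_mul_eq_one_right
  rw [E21_mul, add_neg_cancel, E21_zero]

lemma Dg_inv (a b : A) (h : a * b = 1) : (Dg a b h)⁻¹ = Dg b a (by rw [mul_comm]; exact h) := by
  apply inv_eq_of_mul_eq_one_right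
  apply Subtype.ext
  show (!![a, 0; 0, b] * !![b, 0; 0, a] : Matrix (Fin 2) (Fin 2) A) =
    (1 : Matrix (Fin 2) (Fin 2) A)
  rw [Matrix.mul_fin_two, one_mat]
  refine Matrix.ext fun i j => ?_
  fin_cases i <;> fin_cases j <;> simp <;>
    first
      | ring1
      | linear_combination h

lemma comm_E12 (a b : A) (h : a * b = 1) (y : A) :
    ⁅Dg a b h, E12 y⁆ = E12 ((a * a - 1) * y) := by
  rw [commutatorElement_def, Dg_inv, E12_inv]
  apply Subtype.ext
  show (!![a, 0; 0, b] * !![1, y; 0, 1] * !![b, 0; 0, a] * !![1, -y; 0, 1] :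
    Matrix (Fin 2) (Fin 2) A) = !![1, (a * a - 1) * y; 0, 1]
  rw [Matrix.mul_fin_two, Matrix.mul_fin_two, Matrix.mul_fin_two]
  refine Matrix.ext fun i j => ?_
  fin_cases i <;> fin_cases j <;> simp <;>
    first
      | ring1
      | linear_combination h
      | linear_combination y * h
      | linear_combination (-y) * h

lemma comm_E21 (a b : A) (h : a * b = 1) (y : A) :
    ⁅Dg a b h, E21 y⁆ = E21 ((b * b - 1) * y) := by
  rw [commutatorElement_def, Dg_inv, E21_inv]
  apply Subtype.ext
  show (!![a, 0; 0, b] * !![1, 0; y, 1] * !![b, 0; 0, a] * !![1, 0; -y, 1] :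
    Matrix (Fin 2) (Fin 2) A) = !![1, 0; (b * b - 1) * y, 1]
  rw [Matrix.mul_fin_two, Matrix.mul_fin_two, Matrix.mul_fin_two]
  refine Matrix.ext fun i j => ?_
  fin_cases i <;> fin_cases j <;> simp <;>
    first
      | ring1
      | linear_combination h
      | linear_combination y * h
      | linear_combination (-y) * h
      | linear_combination (b * y) * h
      | linear_combination (-(b * y)) * h
      | linear_combination (a * y) * h
      | linear_combination (-(a * y)) * h

lemma Dg_eq (a b : A) (h : a * b = 1) :
    Dg a b h = (E12 a * E21 (-b) * E12 a) * (E12 (-1) * E21 1 * E12 (-1)) := by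
  apply Subtype.ext
  show (!![a, 0; 0, b] : Matrix (Fin 2) (Fin 2) A) =
    !![1, a; 0, 1] * !![1, 0; -b, 1] * !![1, a; 0, 1] *
      (!![1, -1; 0, 1] * !![1, 0; 1, 1] * !![1, -1; 0, 1])
  rw [Matrix.mul_fin_two, Matrix.mul_fin_two, Matrix.mul_fin_two, Matrix.mul_fin_two,
    Matrix.mul_fin_two]
  refine Matrix.ext fun i j => ?_
  fin_cases i <;> fin_cases j <;> simp <;>
    first
      | ring1
      | linear_combination h
      | linear_combination (-h)
      | linear_combination a * h
      | linear_combination (-a) * h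
      | linear_combination b * h
      | linear_combination (-b) * h

lemma wel_eq : (wel : GH.SL2 A) = E12 1 * E21 (-1) * E12 1 := by
  apply Subtype.ext
  show (!![0, 1; -1, 0] : Matrix (Fin 2) (Fin 2) A) =
    !![1, 1; 0, 1] * !![1, 0; -1, 1] * !![1, 1; 0, 1]
  rw [Matrix.mul_fin_two, Matrix.mul_fin_two]
  congr 1 <;> ring

end SL
section SLLaurent
open Matrix LaurentPolynomial

variable {K : Type} [Field K] [Infinite K]

local notation "AL" => LaurentPolynomial K

lemma exists_good_unit : ∃ u : K, u ≠ 0 ∧ u * u ≠ 1 := by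
  classical
  obtain ⟨u, hu⟩ := Infinite.exists_notMem_finset ({0, 1, -1} : Finset K)
  simp only [Finset.mem_insert, Finset.mem_singleton, not_or] at hu
  refine ⟨u, hu.1, fun h => ?_⟩
  rcases mul_self_eq_one_iff.1 h with h1 | h1
  · exact hu.2.1 h1
  · exact hu.2.2 h1

lemma E12_mem_comm (x : AL) : E12 x ∈ commutator (GH.SL2 AL) := by
  obtain ⟨u, hu0, hu1⟩ := exists_good_unit (K := K)
  have hinv : (C u : AL) * C u⁻¹ = 1 := by
    rw [← _root_.map_mul, mul_inv_cancel₀ hu0, _root_.map_one]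
  have hval : u * u - 1 ≠ 0 := sub_ne_zero.2 hu1
  have key := comm_E12 (C u) (C u⁻¹) hinv (C (u * u - 1)⁻¹ * x)
  have : (C u * C u - 1 : AL) * (C (u * u - 1)⁻¹ * x) = x := by
    rw [← _root_.map_mul, show (C (u * u) - 1 : AL) = C (u * u - 1) from by rw [_root_.map_sub, _root_.map_one],
      ← mul_assoc, ← _root_.map_mul, mul_inv_cancel₀ hval, _root_.map_one, one_mul]
  rw [this] at key
  rw [← key, commutator_def]
  exact Subgroup.commutator_mem_commutator (Subgroup.mem_top _) (Subgroup.mem_top _)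

lemma E21_mem_comm (x : AL) : E21 x ∈ commutator (GH.SL2 AL) := by
  obtain ⟨u, hu0, hu1⟩ := exists_good_unit (K := K)
  have hu0' : u⁻¹ ≠ 0 := inv_ne_zero hu0
  have hinv : (C u : AL) * C u⁻¹ = 1 := by
    rw [← _root_.map_mul, mul_inv_cancel₀ hu0, _root_.map_one]
  have hval : u⁻¹ * u⁻¹ - 1 ≠ 0 := by
    rw [sub_ne_zero]
    intro h
    apply hu1
    have := congrArg (fun z => (u * u) * z) h
    simp only [mul_one] at this
    rw [show u * u * (u⁻¹ * u⁻¹) = (u * u⁻¹) * (u * u⁻¹) from by ring,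
      mul_inv_cancel₀ hu0, one_mul] at this
    exact this.symm
  have key := comm_E21 (C u) (C u⁻¹) hinv (C (u⁻¹ * u⁻¹ - 1)⁻¹ * x)
  have : (C u⁻¹ * C u⁻¹ - 1 : AL) * (C (u⁻¹ * u⁻¹ - 1)⁻¹ * x) = x := by
    rw [← _root_.map_mul,
      show (C (u⁻¹ * u⁻¹) - 1 : AL) = C (u⁻¹ * u⁻¹ - 1) from by rw [_root_.map_sub, _root_.map_one],
      ← mul_assoc, ← _root_.map_mul, mul_inv_cancel₀ hval, _root_.map_one, one_mul]
  rw [this] at key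
  rw [← key, commutator_def]
  exact Subgroup.commutator_mem_commutator (Subgroup.mem_top _) (Subgroup.mem_top _)

lemma Dg_mem_comm (a b : AL) (h : a * b = 1) : Dg a b h ∈ commutator (GH.SL2 AL) := by
  rw [Dg_eq]
  exact mul_mem (mul_mem (mul_mem (E12_mem_comm a) (E21_mem_comm (-b))) (E12_mem_comm a))
    (mul_mem (mul_mem (E12_mem_comm (-1)) (E21_mem_comm 1)) (E12_mem_comm (-1)))

lemma wel_mem_comm : (wel : GH.SL2 AL) ∈ commutator (GH.SL2 AL) := by
  rw [wel_eq]
  exact mul_mem (mul_mem (E12_mem_comm 1) (E21_mem_comm (-1))) (E12_mem_comm 1)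

lemma tri_mem_comm (M : GH.SL2 AL) (hc : (M : Matrix (Fin 2) (Fin 2) AL) 1 0 = 0) :
    M ∈ commutator (GH.SL2 AL) := by
  set a := (M : Matrix (Fin 2) (Fin 2) AL) 0 0 with ha
  set b := (M : Matrix (Fin 2) (Fin 2) AL) 0 1 with hb
  set d := (M : Matrix (Fin 2) (Fin 2) AL) 1 1 with hd
  have hdet : a * d = 1 := by
    have := M.2
    rw [Matrix.det_fin_two] at this
    rw [← ha, ← hb, ← hd] at this
    rw [hc, mul_zero, sub_zero] at this
    exact this
  have hM : M = Dg a d hdet * E12 (d * b) := by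
    apply Subtype.ext
    show (M : Matrix (Fin 2) (Fin 2) AL) = !![a, 0; 0, d] * !![1, d * b; 0, 1]
    rw [Matrix.mul_fin_two, Matrix.eta_fin_two (M : Matrix (Fin 2) (Fin 2) AL), ← ha, ← hb,
      ← hd, hc]
    refine Matrix.ext fun i j => ?_
    fin_cases i <;> fin_cases j <;> (try simp) <;>
      first
        | ring1
        | linear_combination b * hdet
        | linear_combination (-b) * hdet
  rw [hM]
  exact mul_mem (Dg_mem_comm a d hdet) (E12_mem_comm (d * b))

lemma sl2_mem_comm (M : GH.SL2 AL) : M ∈ commutator (GH.SL2 AL) := by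
  suffices h : ∀ (N : ℕ) (M : GH.SL2 AL),
      lwidth ((M : Matrix (Fin 2) (Fin 2) AL) 1 0) < N → M ∈ commutator (GH.SL2 AL) from
    h (lwidth ((M : Matrix (Fin 2) (Fin 2) AL) 1 0) + 1) M (Nat.lt_succ_self _)
  intro N
  induction N with
  | zero => intro M hM; omega
  | succ N ih =>
      intro M hM
      by_cases hc : (M : Matrix (Fin 2) (Fin 2) AL) 1 0 = 0
      · exact tri_mem_comm M hc
      · obtain ⟨q, r, hqr, hr⟩ :=
          laurent_div ((M : Matrix (Fin 2) (Fin 2) AL) 0 0)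
            ((M : Matrix (Fin 2) (Fin 2) AL) 1 0) hc
        set M₂ := wel * (E12 (-q) * M) with hM₂def
        have h21 : (M₂ : Matrix (Fin 2) (Fin 2) AL) 1 0 = -r := by
          show ((wel * (E12 (-q) * M) : GH.SL2 AL) : Matrix (Fin 2) (Fin 2) AL) 1 0 = -r
          rw [Matrix.SpecialLinearGroup.coe_mul, Matrix.SpecialLinearGroup.coe_mul]
          rw [show ((wel : GH.SL2 AL) : Matrix (Fin 2) (Fin 2) AL) = !![0,1;-1,0] from rfl,
            show ((E12 (-q) : GH.SL2 AL) : Matrix (Fin 2) (Fin 2) AL) = !![1,-q;0,1] from rfl,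
            Matrix.eta_fin_two (M : Matrix (Fin 2) (Fin 2) AL),
            Matrix.mul_fin_two, Matrix.mul_fin_two]
          try simp
          linear_combination -hqr
        have hM₂mem : M₂ ∈ commutator (GH.SL2 AL) := by
          rcases hr with h0 | hlt
          · exact tri_mem_comm M₂ (by rw [h21, h0, neg_zero])
          · exact ih M₂ (by rw [h21, lwidth_neg]; omega)
        have hM' : M = E12 q * ((wel)⁻¹ * M₂) := by
          rw [hM₂def, inv_mul_cancel_left, ← mul_assoc, E12_mul, add_neg_cancel, E12_zero,
            one_mul]
        rw [hM']
        exact mul_mem (E12_mem_comm q)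
          (mul_mem (Subgroup.inv_mem _ wel_mem_comm) hM₂mem)

lemma sl2_perfect : commutator (GH.SL2 AL) = ⊤ := by
  rw [eq_top_iff]
  intro M _
  exact sl2_mem_comm M

end SLLaurent


/-- For an infinite field `k`, `H₁(SL₂(k[t,t⁻¹]); ℤ) = 0`; equivalently,
`SL₂(k[t,t⁻¹])` is a perfect group. -/
theorem statement1 (k : Type) [Field k] [Infinite k] :
    Subsingleton (GH.H ℤ 1 (GH.SL2 (LaurentPolynomial k))) ∧
      commutator (GH.SL2 (LaurentPolynomial k)) = ⊤ := by
  have hperf : commutator (GH.SL2 (LaurentPolynomial k)) = ⊤ := sl2_perfect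
  exact ⟨h1_subsingleton _ hperf, hperf⟩
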